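/- Let Ψ : Symⁿ(ℂ) → ℂⁿ be the map sending an unordered n-tuple {λ₁,…,λₙ} of complex numbers to the coefficients (a₁,…,aₙ) of the monic polynomial zⁿ + a₁z^{n−1} + ⋯ + aₙ whose roots are λ₁,…,λₙ. Then Ψ is a bijective continuous map, and its inverse is Hölder continuous: there exists ζ ≥ 1 (depending on n) such that for all a, a' ∈ ℂⁿ with |a|, |a'| ≤ 1, each root λ of the polynomial with coefficients a lies within distance ζ·|a − a'|^{1/ζ} of some root of the polynomial with coefficients a'. -/
import Mathlib

open Polynomial

-- degree of a coefficient-sum is < n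
private lemma deg_sum_lt (n : ℕ) (c : Fin n → ℂ) (e : Fin n → ℕ) (he : ∀ j, e j < n) :
    (∑ j : Fin n, C (c j) * X ^ (e j)).degree < (n : WithBot ℕ) := by
  refine lt_of_le_of_lt (degree_sum_le _ _) ?_
  rw [Finset.sup_lt_iff (by exact WithBot.bot_lt_coe n)]
  intro j _
  refine lt_of_le_of_lt (degree_C_mul_X_pow_le _ _) ?_
  exact_mod_cast he j

private lemma monic_aux (n : ℕ) (c : Fin n → ℂ) (e : Fin n → ℕ) (he : ∀ j, e j < n) :
    (X ^ n + ∑ j : Fin n, C (c j) * X ^ (e j)).Monic :=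
  monic_X_pow_add (deg_sum_lt n c e he)

private lemma natDegree_aux (n : ℕ) (c : Fin n → ℂ) (e : Fin n → ℕ) (he : ∀ j, e j < n) :
    (X ^ n + ∑ j : Fin n, C (c j) * X ^ (e j)).natDegree = n := by
  have h : (X ^ n + ∑ j : Fin n, C (c j) * X ^ (e j)).degree = (n : WithBot ℕ) := by
    rw [add_comm, degree_add_eq_right_of_degree_lt]
    · exact degree_X_pow n
    · rw [degree_X_pow]; exact deg_sum_lt n c e he
  exact natDegree_eq_of_degree_eq_some h

private lemma coeff_aux (n : ℕ) (c : Fin n → ℂ) (j : Fin n) :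
    (X ^ n + ∑ i : Fin n, C (c i) * X ^ (i : ℕ)).coeff (j : ℕ) = c j := by
  rw [coeff_add, coeff_X_pow, if_neg (by omega), finset_sum_coeff]
  rw [Finset.sum_eq_single j]
  · simp [coeff_C_mul, coeff_X_pow]
  · intro b _ hb
    simp only [coeff_C_mul, coeff_X_pow]
    rw [if_neg (fun h => hb (Fin.ext h.symm)), mul_zero]
  · simp

private lemma eval_aux (n : ℕ) (a : Fin n → ℂ) (lam : ℂ) :
    eval lam (X ^ n + ∑ j : Fin n, C (a j) * X ^ (n - 1 - (j : ℕ)))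
      = lam ^ n + ∑ j : Fin n, a j * lam ^ (n - 1 - (j : ℕ)) := by
  simp [eval_finset_sum]

-- roots are bounded by n
private lemma root_bound (n : ℕ) (hn : 1 ≤ n) (a : Fin n → ℂ) (ha : ‖a‖ ≤ 1) (lam : ℂ)
    (h : lam ^ n + ∑ j : Fin n, a j * lam ^ (n - 1 - (j : ℕ)) = 0) : ‖lam‖ ≤ n := by
  by_contra hlt
  push_neg at hlt
  have h1 : (1 : ℝ) ≤ ‖lam‖ := le_trans (by exact_mod_cast hn) hlt.le
  have heq : lam ^ n = -∑ j : Fin n, a j * lam ^ (n - 1 - (j : ℕ)) := by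
    linear_combination h
  have key : ‖lam‖ ^ n ≤ n * ‖lam‖ ^ (n - 1) := by
    calc ‖lam‖ ^ n = ‖lam ^ n‖ := (norm_pow _ _).symm
      _ = ‖∑ j : Fin n, a j * lam ^ (n - 1 - (j : ℕ))‖ := by rw [heq, norm_neg]
      _ ≤ ∑ j : Fin n, ‖a j * lam ^ (n - 1 - (j : ℕ))‖ := norm_sum_le _ _
      _ ≤ ∑ _j : Fin n, 1 * ‖lam‖ ^ (n - 1) := by
          refine Finset.sum_le_sum fun j _ => ?_
          rw [norm_mul, norm_pow]
          exact mul_le_mul (le_trans (norm_le_pi_norm a j) ha)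
            (pow_le_pow_right₀ h1 (by omega)) (by positivity) zero_le_one
      _ = n * ‖lam‖ ^ (n - 1) := by simp [Finset.card_univ]
  have hsplit : ‖lam‖ ^ n = ‖lam‖ * ‖lam‖ ^ (n - 1) := by
    rw [← pow_succ']; congr 1; omega
  rw [hsplit] at key
  have hpos : (0 : ℝ) < ‖lam‖ ^ (n - 1) := by positivity
  have := le_of_mul_le_mul_right key hpos
  exact absurd this (not_le.mpr hlt)

private lemma nnnorm_multiset_prod' (s : Multiset ℂ) :
    ‖s.prod‖₊ = (s.map fun z => ‖z‖₊).prod := by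
  induction s using Multiset.induction with
  | empty => simp
  | cons a s ih => simp [nnnorm_mul, ih]

open Polynomial in
theorem sym_coeff_bijective_and_holder (n : ℕ) :
    Function.Bijective
      (fun m : {m : Multiset ℂ // Multiset.card m = n} =>
        fun j : Fin n => ((m.1.map fun z => X - C z).prod).coeff (j : ℕ))
    ∧ ∃ ζ : ℝ, 1 ≤ ζ ∧ ∀ a a' : Fin n → ℂ, ‖a‖ ≤ 1 → ‖a'‖ ≤ 1 →
        ∀ lam : ℂ, lam ^ n + ∑ j : Fin n, a j * lam ^ (n - 1 - (j : ℕ)) = 0 →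
          ∃ mu : ℂ, (mu ^ n + ∑ j : Fin n, a' j * mu ^ (n - 1 - (j : ℕ)) = 0)
            ∧ ‖lam - mu‖ ≤ ζ * ‖a - a'‖ ^ (1 / ζ) := by
  constructor
  · constructor
    · -- injective
      rintro ⟨m, hm⟩ ⟨m', hm'⟩ h
      simp only at h
      set p := (m.map fun z => X - C z).prod with hp
      set p' := (m'.map fun z => X - C z).prod with hp'
      have hmon : p.Monic := monic_multiset_prod_of_monic _ _ fun z _ => monic_X_sub_C z
      have hmon' : p'.Monic := monic_multiset_prod_of_monic _ _ fun z _ => monic_X_sub_C z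
      have hd : p.natDegree = n := by
        rw [hp, natDegree_multiset_prod_X_sub_C_eq_card, hm]
      have hd' : p'.natDegree = n := by
        rw [hp', natDegree_multiset_prod_X_sub_C_eq_card, hm']
      have hpp : p = p' := by
        ext k
        rcases lt_trichotomy k n with hk | hk | hk
        · exact congrFun h ⟨k, hk⟩
        · subst hk
          rw [← hd, hmon.coeff_natDegree, hd, ← hd', hmon'.coeff_natDegree]
        · rw [coeff_eq_zero_of_natDegree_lt (by omega),
            coeff_eq_zero_of_natDegree_lt (by omega)]
      have : m = m' := by
        have := roots_multiset_prod_X_sub_C m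
        rw [← hp] at this
        have h2 := roots_multiset_prod_X_sub_C m'
        rw [← hp'] at h2
        rw [← this, ← h2, hpp]
      exact Subtype.ext this
    · -- surjective
      intro c
      set p : ℂ[X] := X ^ n + ∑ j : Fin n, C (c j) * X ^ (j : ℕ) with hpdef
      have hmon : p.Monic := monic_aux n c _ fun j => j.2
      have hd : p.natDegree = n := natDegree_aux n c _ fun j => j.2
      have hcard : Multiset.card p.roots = n := by
        rw [← hd]
        exact (splits_iff_card_roots.mp (IsAlgClosed.splits p))
      refine ⟨⟨p.roots, hcard⟩, ?_⟩
      have hprod : (p.roots.map fun z => X - C z).prod = p :=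
        prod_multiset_X_sub_C_of_monic_of_roots_card_eq hmon (by rw [hcard, hd])
      funext j
      simp only [hprod]
      exact coeff_aux n c j
  · -- Hölder part
    rcases Nat.eq_zero_or_pos n with rfl | hn
    · exact ⟨1, le_refl 1, fun a a' _ _ lam h => by simp at h⟩
    refine ⟨2 * n, ?_, ?_⟩
    · have : (1 : ℝ) ≤ n := by exact_mod_cast hn
      linarith
    intro a a' ha ha' lam hlam
    set ζ : ℝ := 2 * n with hζ
    have hnR : (1 : ℝ) ≤ n := by exact_mod_cast hn
    have hζpos : (0 : ℝ) < ζ := by rw [hζ]; positivity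
    -- the polynomial q with coefficients a'
    set q : ℂ[X] := X ^ n + ∑ j : Fin n, C (a' j) * X ^ (n - 1 - (j : ℕ)) with hq
    have he : ∀ j : Fin n, n - 1 - (j : ℕ) < n := fun j => by omega
    have hqmon : q.Monic := monic_aux n a' _ he
    have hqd : q.natDegree = n := natDegree_aux n a' _ he
    have hqcard : Multiset.card q.roots = n := by
      rw [← hqd]
      exact splits_iff_card_roots.mp (IsAlgClosed.splits q)
    have hroots_ne : q.roots ≠ 0 := by
      intro h0
      rw [h0] at hqcard
      simp at hqcard
      omega
    -- choose the closest root
    obtain ⟨mu, hmu_mem, hmu_min⟩ :=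
      Finset.exists_min_image q.roots.toFinset (fun v => ‖lam - v‖)
        (Multiset.toFinset_nonempty.mpr hroots_ne)
    have hmu_root : q.IsRoot mu := isRoot_of_mem_roots (Multiset.mem_toFinset.mp hmu_mem)
    refine ⟨mu, ?_, ?_⟩
    · have := hmu_root
      rwa [IsRoot.def, hq, eval_aux] at this
    -- bounds
    have hlam_n : ‖lam‖ ≤ n := root_bound n hn a ha lam hlam
    have hmu_n : ‖mu‖ ≤ n := by
      refine root_bound n hn a' ha' mu ?_
      have := hmu_root
      rwa [IsRoot.def, hq, eval_aux] at this
    set D : ℝ := ‖a - a'‖ with hD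
    have hD0 : 0 ≤ D := norm_nonneg _
    have hD2 : D ≤ 2 := by
      calc D ≤ ‖a‖ + ‖a'‖ := norm_sub_le _ _
        _ ≤ 2 := by linarith
    -- |q(lam)| ≤ n^n * D
    have hqeval : ‖eval lam q‖ ≤ (n : ℝ) ^ n * D := by
      have : eval lam q = ∑ j : Fin n, (a' j - a j) * lam ^ (n - 1 - (j : ℕ)) := by
        rw [hq, eval_aux]
        rw [show lam ^ n = -∑ j : Fin n, a j * lam ^ (n - 1 - (j : ℕ)) by
          linear_combination hlam, neg_add_eq_sub, ← Finset.sum_sub_distrib]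
        exact Finset.sum_congr rfl fun j _ => by ring
      rw [this]
      calc ‖∑ j : Fin n, (a' j - a j) * lam ^ (n - 1 - (j : ℕ))‖
          ≤ ∑ j : Fin n, ‖(a' j - a j) * lam ^ (n - 1 - (j : ℕ))‖ := norm_sum_le _ _
        _ ≤ ∑ _j : Fin n, D * (n : ℝ) ^ (n - 1) := by
            refine Finset.sum_le_sum fun j _ => ?_
            rw [norm_mul, norm_pow]
            refine mul_le_mul ?_ ?_ (by positivity) hD0
            · have : a' j - a j = -((a - a') j) := by simp
              rw [this, norm_neg]
              exact norm_le_pi_norm (a - a') j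
            · calc ‖lam‖ ^ (n - 1 - (j : ℕ)) ≤ (n : ℝ) ^ (n - 1 - (j : ℕ)) :=
                    pow_le_pow_left₀ (norm_nonneg _) hlam_n _
                _ ≤ (n : ℝ) ^ (n - 1) := pow_le_pow_right₀ hnR (by omega)
        _ = (n : ℝ) * (D * (n : ℝ) ^ (n - 1)) := by simp [Finset.card_univ]
        _ = (n : ℝ) ^ n * D := by
            rw [show (n : ℝ) ^ n = (n : ℝ) * (n : ℝ) ^ (n - 1) by
              rw [← pow_succ']; congr 1; omega]
            ring
    -- ‖lam - mu‖ ^ n ≤ ‖eval lam q‖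
    have hmin_pow : ‖lam - mu‖ ^ n ≤ ‖eval lam q‖ := by
      have hfact : q = (q.roots.map fun z => X - C z).prod :=
        (prod_multiset_X_sub_C_of_monic_of_roots_card_eq hqmon (by rw [hqcard, hqd])).symm
      have hev : eval lam q = (q.roots.map fun v => lam - v).prod := by
        conv_lhs => rw [hfact]
        rw [eval_multiset_prod, Multiset.map_map]
        congr 1
        exact Multiset.map_congr rfl fun v _ => by simp
      have key : ‖lam - mu‖₊ ^ n ≤ ‖eval lam q‖₊ := by
        rw [hev, nnnorm_multiset_prod', Multiset.map_map]
        have hcardm : Multiset.card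
            (q.roots.map ((fun z => ‖z‖₊) ∘ fun v => lam - v)) = n := by
          rw [Multiset.card_map, hqcard]
        rw [← hcardm]
        refine Multiset.pow_card_le_prod fun x hx => ?_
        obtain ⟨v, hv, rfl⟩ := Multiset.mem_map.mp hx
        exact_mod_cast hmu_min v (Multiset.mem_toFinset.mpr hv)
      exact_mod_cast key
    -- conclude
    have hrn : ‖lam - mu‖ ^ n ≤ (n : ℝ) ^ n * D := le_trans hmin_pow hqeval
    rcases le_or_gt 1 D with hD1 | hD1
    · -- D ≥ 1 : trivial bound
      have h1 : ‖lam - mu‖ ≤ 2 * n := by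
        calc ‖lam - mu‖ ≤ ‖lam‖ + ‖mu‖ := norm_sub_le _ _
          _ ≤ 2 * n := by linarith
      have h2 : (1 : ℝ) ≤ D ^ (1 / ζ) :=
        Real.one_le_rpow hD1 (by positivity)
      calc ‖lam - mu‖ ≤ 2 * n := h1
        _ = ζ * 1 := by rw [hζ]; ring
        _ ≤ ζ * D ^ (1 / ζ) := by
            exact mul_le_mul_of_nonneg_left h2 hζpos.le
    · -- D < 1
      have hr : ‖lam - mu‖ ≤ (n : ℝ) * D ^ (1 / (n : ℝ)) := by
        have hs : (0 : ℝ) ≤ (n : ℝ) * D ^ (1 / (n : ℝ)) := by positivity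
        have hpow : ((n : ℝ) * D ^ (1 / (n : ℝ))) ^ n = (n : ℝ) ^ n * D := by
          rw [mul_pow, ← Real.rpow_natCast (D ^ (1 / (n : ℝ))) n,
            ← Real.rpow_mul hD0]
          rw [show 1 / (n : ℝ) * n = 1 by field_simp]
          rw [Real.rpow_one]
        have := hrn
        rw [← hpow] at this
        exact le_of_pow_le_pow_left₀ (by omega) hs this
      have hexp : D ^ (1 / (n : ℝ)) ≤ D ^ (1 / ζ) := by
        rcases eq_or_lt_of_le hD0 with h0 | h0
        · rw [← h0, Real.zero_rpow (by positivity), Real.zero_rpow (by positivity)]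
        · exact Real.rpow_le_rpow_of_exponent_ge h0 hD1.le
            (by rw [hζ]; rw [div_le_div_iff₀ (by positivity) (by positivity)]; nlinarith)
      calc ‖lam - mu‖ ≤ (n : ℝ) * D ^ (1 / (n : ℝ)) := hr
        _ ≤ ζ * D ^ (1 / ζ) := by
            refine mul_le_mul ?_ hexp (by positivity) hζpos.le
            rw [hζ]; linarith
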